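/- arXiv:1811.03972 — 5 statements merged into one kernel-verified Lean document; each statement's English description precedes it below -/
import Mathlib

section
/- Let G be a finite group, χ a faithful irreducible complex character of G, and x, y ∈ G with [x,y] ∈ Z(G). If χ(x) ≠ 0, then [x,y] = 1. -/
open CategoryTheory

/-- If `χ` is a faithful irreducible character of a finite group `G`, `x, y ∈ G` with
`[x,y] ∈ Z(G)` and `χ(x) ≠ 0`, then `[x,y] = 1`. -/
theorem central_commutator_trivial_of_nonvanishing (G : Type) [Group G] [Fintype G]
    (V : FDRep ℂ G) [Simple V]
    (hfaith : ∀ g : G, V.character g = V.character 1 → g = 1)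
    (x y : G) (hz : x⁻¹ * y⁻¹ * x * y ∈ Subgroup.center G)
    (hx : V.character x ≠ 0) :
    x⁻¹ * y⁻¹ * x * y = 1 := by
  set z := x⁻¹ * y⁻¹ * x * y with hzdef
  rw [Subgroup.mem_center_iff] at hz
  -- ρ z is a morphism of representations
  let f : V ⟶ V := ⟨InducedCategory.homMk (ModuleCat.ofHom (V.ρ z)), fun g => by
    ext v
    show V.ρ z (V.ρ g v) = V.ρ g (V.ρ z v)
    rw [← Module.End.mul_apply, ← Module.End.mul_apply, ← map_mul, ← map_mul, hz g]⟩
  obtain ⟨c, hc⟩ := endomorphism_simple_eq_smul_id ℂ f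
  -- so ρ z = c • id
  have hfz : (V.ρ z : V →ₗ[ℂ] V) = c • LinearMap.id := by
    have := congrArg (fun φ : V ⟶ V => φ.hom.hom.hom) hc
    exact this.symm.trans rfl
  -- χ (x * z) = c * χ x
  have h1 : V.character (x * z) = c * V.character x := by
    simp only [FDRep.character, map_mul]
    have : (V.ρ x : V →ₗ[ℂ] V) * V.ρ z = c • (V.ρ x : V →ₗ[ℂ] V) := by
      rw [hfz]; ext v; simp
    rw [this, map_smul]
    simp [smul_eq_mul]
  -- but x * z = y⁻¹ * x * y is conjugate to x
  have h2 : V.character (x * z) = V.character x := by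
    have hxz : x * z = y⁻¹ * (x * y) := by
      rw [hzdef]; group
    rw [hxz, ← FDRep.char_mul_comm]
    congr 1
    group
  have hc1 : c = 1 :=
    mul_right_cancel₀ hx ((h1.symm.trans h2).trans (one_mul _).symm)
  have hz1 : V.character z = V.character 1 := by
    simp only [FDRep.character, hfz, hc1, one_smul]
    simp
  exact hfaith z hz1
end

section
/- Let G be a finite group and χ a faithful irreducible character of G whose set of zeros is exactly one conjugacy class 𝒞. Then every non-trivial element z of Z(G) is a commutator; in fact z = [x,y] for some x, y ∈ 𝒞. -/
open CategoryTheory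

/-- If `χ` is a faithful irreducible character of `G` whose set of zeros is exactly one
conjugacy class `𝒞`, then every non-trivial central element is a commutator `[x,y]` with
`x, y ∈ 𝒞`. -/
theorem central_elements_are_commutators_of_zeros (G : Type) [Group G] [Fintype G]
    (V : FDRep ℂ G) [Simple V]
    (hfaith : ∀ g : G, V.character g = V.character 1 → g = 1)
    (c : G) (hC : {g : G | V.character g = 0} = conjugatesOf c) :
    ∀ z ∈ Subgroup.center G, z ≠ 1 →
      ∃ x y : G, V.character x = 0 ∧ V.character y = 0 ∧ z = x⁻¹ * y⁻¹ * x * y := by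
  intro z hz hz1
  have hcomm : ∀ w : G, w * z = z * w := fun w => Subgroup.mem_center_iff.mp hz w
  -- `z` acts as a scalar `ε` by Schur's lemma
  have hφ : ∃ φ : V ⟶ V, φ.hom.hom.hom = V.ρ z := by
    refine ⟨⟨InducedCategory.homMk (ModuleCat.ofHom (V.ρ z)), fun g => ?_⟩, rfl⟩
    ext v
    change V.ρ z (V.ρ g v) = V.ρ g (V.ρ z v)
    rw [← Module.End.mul_apply, ← Module.End.mul_apply, ← map_mul, ← map_mul, hcomm g]
  obtain ⟨φ, hφ⟩ := hφ
  obtain ⟨ε, hε⟩ := endomorphism_simple_eq_smul_id ℂ φ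
  have hρz : V.ρ z = ε • (LinearMap.id : V →ₗ[ℂ] V) := by
    have h := congrArg (fun f : V ⟶ V => f.hom.hom.hom) hε
    rw [hφ] at h
    exact h.symm
  have hmul : ∀ g : G, V.character (z * g) = ε * V.character g := by
    intro g
    show LinearMap.trace ℂ V (V.ρ (z * g)) = ε * LinearMap.trace ℂ V (V.ρ g)
    rw [map_mul, hρz, smul_mul_assoc, Module.End.mul_eq_comp, LinearMap.id_comp, map_smul,
      smul_eq_mul]
  have hεne : ε ≠ 1 := by
    intro h
    apply hz1
    apply hfaith
    have := hmul 1
    rw [mul_one, h, one_mul] at this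
    exact this
  -- `c` is a zero of the character
  have hc0 : V.character c = 0 := by
    have : c ∈ {g : G | V.character g = 0} := by
      rw [hC]; exact mem_conjugatesOf_self
    exact this
  -- `z * c` is a zero, hence conjugate to `c`
  have hzc : V.character (z * c) = 0 := by rw [hmul, hc0, mul_zero]
  have : (z * c) ∈ conjugatesOf c := by rw [← hC]; exact hzc
  obtain ⟨g, hg⟩ := isConj_iff.mp this
  -- key identity : c * g⁻¹ * c⁻¹ = z * g⁻¹
  have hkey : c * g⁻¹ * c⁻¹ = z * g⁻¹ := by
    have e1 : g⁻¹ * (z * c) * g = c := by rw [← hg]; group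
    have e2 : g⁻¹ * c * g = z⁻¹ * c := by
      have : z⁻¹ * (g⁻¹ * (z * c) * g) = z⁻¹ * c := by rw [e1]
      calc g⁻¹ * c * g = z⁻¹ * (z * (g⁻¹ * c) * g) := by group
        _ = z⁻¹ * (g⁻¹ * (z * c) * g) := by
            rw [show z * (g⁻¹ * c) = g⁻¹ * (z * c) by rw [← mul_assoc, ← hcomm g⁻¹, mul_assoc]]
        _ = z⁻¹ * c := by rw [e1]
    have e4 : g⁻¹ * c = z⁻¹ * (c * g⁻¹) := by
      have := congrArg (fun w => w * g⁻¹) e2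
      simpa [mul_assoc] using this
    have e5 : z * (g⁻¹ * c) = c * g⁻¹ := by rw [e4, ← mul_assoc, mul_inv_cancel, one_mul]
    calc c * g⁻¹ * c⁻¹ = z * (g⁻¹ * c) * c⁻¹ := by rw [e5]
      _ = z * g⁻¹ := by group
  -- hence `g⁻¹` is also a zero
  have hg0 : V.character g⁻¹ = 0 := by
    have h1 : V.character (c * g⁻¹ * c⁻¹) = V.character g⁻¹ := V.char_conj g⁻¹ c
    rw [hkey, hmul] at h1
    have h2 : (ε - 1) * V.character g⁻¹ = 0 := by linear_combination h1
    rcases mul_eq_zero.mp h2 with h | h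
    · exact absurd (sub_eq_zero.mp h) hεne
    · exact h
  refine ⟨c, g⁻¹, hc0, hg0, ?_⟩
  -- z = c⁻¹ * g * c * g⁻¹
  have : c⁻¹ * (g * c * g⁻¹) = z := by
    rw [hg, ← mul_assoc, hcomm c⁻¹, mul_assoc, inv_mul_cancel, mul_one]
  rw [inv_inv]
  rw [← this]
  group
end

section
/- Let G be a finite group and χ a faithful irreducible character of G whose set of zeros is exactly one conjugacy class 𝒞, and suppose every element of 𝒞 has order a power of a prime p. Then Z(G) is a cyclic p-group. -/
open CategoryTheory

/-- Schur: a central element acts by a scalar in an irreducible complex representation. -/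
lemma central_scalar_aux (G : Type) [Group G] (V : FDRep ℂ G) [Simple V]
    (z : G) (hz : z ∈ Subgroup.center G) : ∃ ω : ℂ, V.ρ z = ω • (1 : V →ₗ[ℂ] V) := by
  let f : V ⟶ V := Action.Hom.mk (FGModuleCat.ofHom (V.ρ z)) (fun g => by
      ext v
      show V.ρ z (V.ρ g v) = V.ρ g (V.ρ z v)
      rw [← Module.End.mul_apply, ← Module.End.mul_apply, ← map_mul, ← map_mul,
        (Subgroup.mem_center_iff.mp hz g)])
  obtain ⟨ω, hω⟩ := CategoryTheory.endomorphism_simple_eq_smul_id ℂ f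
  refine ⟨ω, ?_⟩
  have h2 := congrArg Action.Hom.hom hω
  simp only [Action.smul_hom, Action.id_hom, f] at h2
  exact (congrArg (fun f => f.hom.hom) h2).symm

/-- If `χ` is a faithful irreducible character of `G` whose set of zeros is exactly one
conjugacy class, all of whose elements have `p`-power order, then `Z(G)` is a cyclic
`p`-group. -/
theorem center_is_cyclic_p_group (G : Type) [Group G] [Fintype G]
    (V : FDRep ℂ G) [Simple V]
    (hfaith : ∀ g : G, V.character g = V.character 1 → g = 1)
    (c : G) (hC : {g : G | V.character g = 0} = conjugatesOf c)
    (p : ℕ) (hp : p.Prime)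
    (hord : ∀ g : G, V.character g = 0 → ∃ k : ℕ, orderOf g = p ^ k) :
    IsCyclic ↥(Subgroup.center G) ∧ IsPGroup p ↥(Subgroup.center G) := by
  classical
  -- a nonzero vector
  have hxV : ∃ x : V, x ≠ 0 := by
    by_contra h
    push_neg at h
    refine CategoryTheory.id_nonzero V ?_
    ext v
    simp [h v, h]
  obtain ⟨x, hx⟩ := hxV
  have hscal : ∀ a b : ℂ, a • x = b • x → a = b := fun a b h =>
    smul_left_injective ℂ hx h
  choose ω hω using fun z : Subgroup.center G => central_scalar_aux G V z z.2
  have happ : ∀ z : Subgroup.center G, V.ρ (z : G) x = ω z • x := by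
    intro z; rw [hω z]; simp
  -- multiplicativity of the central character
  have hmul : ∀ z w : Subgroup.center G, ω (z * w) = ω z * ω w := by
    intro z w
    apply hscal
    have h1 : V.ρ ((z * w : Subgroup.center G) : G) = (ω z * ω w) • 1 := by
      push_cast
      rw [map_mul, hω z, hω w, smul_mul_smul_comm]
      simp
    have := congrArg (fun L : V →ₗ[ℂ] V => L x) ((hω (z * w)).symm.trans h1)
    simpa using this
  have hone : ω 1 = 1 := by
    apply hscal
    have := congrArg (fun L : V →ₗ[ℂ] V => L x) (hω 1)
    simp only [OneMemClass.coe_one, map_one] at this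
    simpa using this.symm
  let φ : Subgroup.center G →* ℂ := ⟨⟨ω, hone⟩, fun a b => hmul a b⟩
  have hinj : Function.Injective φ := by
    intro z w h
    have hρ : V.ρ (z : G) = V.ρ (w : G) := by rw [hω z, hω w]; exact congrArg (· • 1) h
    have h2 : V.ρ ((z⁻¹ * w : Subgroup.center G) : G) = V.ρ (1 : G) := by
      push_cast
      rw [map_mul, ← hρ, ← map_mul, inv_mul_cancel, map_one]
    have h3 : V.character ((z⁻¹ * w : Subgroup.center G) : G) = V.character 1 := by
      simp only [FDRep.character, h2]
    have h4 := hfaith _ h3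
    have h5 : (z⁻¹ * w : Subgroup.center G) = 1 := by
      apply Subtype.ext; exact h4
    exact (inv_mul_eq_one.mp h5)
  have hcyc : IsCyclic ↥(Subgroup.center G) := isCyclic_of_subgroup_isDomain φ hinj
  refine ⟨hcyc, ?_⟩
  -- p-group part
  have hc0 : V.character c = 0 := (Set.ext_iff.mp hC c).mpr (mem_conjugatesOf_self)
  obtain ⟨m, hm⟩ := hord c hc0
  intro z
  have hzc0 : V.character ((z : G) * c) = 0 := by
    simp only [FDRep.character] at hc0 ⊢
    rw [map_mul, hω z, smul_mul_assoc, one_mul, map_smul, hc0, smul_zero]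
  obtain ⟨k, hk⟩ := hord _ hzc0
  have hcomzc : Commute ((z : G) * c) c⁻¹ := by
    refine Commute.mul_left ?_ ((Commute.refl c).inv_right)
    exact (Subgroup.mem_center_iff.mp z.2 c⁻¹).symm
  have hdvd : orderOf (z : G) ∣ p ^ max k m := by
    have h1 : (z : G) = ((z : G) * c) * c⁻¹ := by group
    rw [h1]
    refine hcomzc.orderOf_mul_dvd_lcm.trans ?_
    rw [hk, orderOf_inv, hm]
    exact Nat.lcm_dvd (pow_dvd_pow p (le_max_left _ _)) (pow_dvd_pow p (le_max_right _ _))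
  obtain ⟨j, -, hj⟩ := (Nat.dvd_prime_pow hp).mp hdvd
  refine ⟨j, ?_⟩
  apply Subtype.ext
  push_cast
  rw [← hj]
  exact pow_orderOf_eq_one _
end

section
/- Let G be a finite group, χ a faithful primitive irreducible character of G, and N an abelian normal subgroup of G. Then N ≤ Z(G). -/
open CategoryTheory

open scoped Classical in
/-- The character of `G` induced from a function `θ` on a subgroup `H`. -/
noncomputable def indChar {G : Type} [Group G] [Fintype G] (H : Subgroup G) (θ : ↥H → ℂ) :
    G → ℂ :=
  fun g => (Fintype.card H : ℂ)⁻¹ *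
    ∑ x : G, if h : x * g * x⁻¹ ∈ H then θ ⟨x * g * x⁻¹, h⟩ else 0

/-- A character is primitive if it is not induced from a character of a proper subgroup. -/
def IsPrimitiveChar {G : Type} [Group G] [Fintype G] (χ : G → ℂ) : Prop :=
  ∀ H : Subgroup G, H ≠ ⊤ → ∀ W : FDRep ℂ ↥H, χ ≠ indChar H W.character

namespace AbNormAux
set_option linter.unusedSectionVars false



open Module LinearMap

variable {G : Type} [Group G] [Fintype G] (V : FDRep ℂ G)

lemma invariant_eq_bot_or_top [Simple V] (p : Submodule ℂ V)
    (hp : ∀ g : G, ∀ v ∈ p, V.ρ g v ∈ p) : p = ⊥ ∨ p = ⊤ := by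
  by_cases hbot : p = ⊥
  · exact Or.inl hbot
  right
  let ρ' : Representation ℂ G p :=
    { toFun := fun g => (V.ρ g).restrict (hp g)
      map_one' := by ext v; simp [LinearMap.restrict_apply]
      map_mul' := fun g h => by ext v; simp [LinearMap.restrict_apply] }
  let W : FDRep ℂ G := FDRep.of ρ'
  let ι : W ⟶ V := ⟨FGModuleCat.ofHom p.subtype, fun g => rfl⟩
  haveI : Mono ι := by
    apply Functor.mono_of_mono_map (Action.forget (FGModuleCat ℂ) (MonCat.of G))
    apply Functor.mono_of_mono_map (forget₂ (FGModuleCat ℂ) (ModuleCat ℂ))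
    rw [ModuleCat.mono_iff_injective]
    exact p.injective_subtype
  obtain ⟨x, hxp, hx0⟩ := Submodule.exists_mem_ne_zero_of_ne_bot hbot
  have hι0 : ι ≠ 0 := by
    intro h
    have h2 := congrArg (fun f : W ⟶ V => f.hom ⟨x, hxp⟩) h
    simp only [Action.zero_hom, LinearMap.zero_apply] at h2
    exact hx0 h2
  haveI := isIso_of_mono_of_nonzero (f := ι) hι0
  have hsurj : ∀ v : V, v ∈ p := by
    intro v
    have h1 : (inv ι ≫ ι) = 𝟙 V := IsIso.inv_hom_id ι
    have h2 := congrArg (fun f : V ⟶ V => f.hom v) h1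
    have h3 : (ι.hom ((inv ι).hom v) : V) = v := h2
    rw [← h3]
    exact ((inv ι).hom v).2
  exact Submodule.eq_top_iff'.mpr  hsurj

lemma nontrivial_of_simple [Simple V] : Nontrivial V := by
  rw [← not_subsingleton_iff_nontrivial]
  intro h
  refine id_nonzero V ?_
  haveI : Subsingleton ((forget (FGModuleCat ℂ)).obj V.V) := h
  ext v
  exact Subsingleton.elim _ _

open Module LinearMap


variable {G : Type} [Group G] [Fintype G] (V : FDRep ℂ G)

lemma rho_isFinitelySemisimple (g : G) :
    Module.End.IsFinitelySemisimple (V.ρ g : Module.End ℂ V) := by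
  have hcard : ((Fintype.card G : ℂ)) ≠ 0 := by
    exact_mod_cast Nat.cast_ne_zero.mpr Fintype.card_ne_zero
  have hsq : Squarefree (Polynomial.X ^ Fintype.card G - Polynomial.C (1 : ℂ)) :=
    (Polynomial.separable_X_pow_sub_C (1 : ℂ) hcard one_ne_zero).squarefree
  have h0 : Polynomial.aeval (V.ρ g : Module.End ℂ V) (Polynomial.X ^ Fintype.card G - Polynomial.C (1 : ℂ)) = 0 := by
    simp only [map_sub, Polynomial.aeval_X_pow, Polynomial.aeval_C]
    rw [← map_pow, pow_card_eq_one]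
    simp
  exact (Module.End.isSemisimple_of_squarefree_aeval_eq_zero hsq h0).isFinitelySemisimple

lemma eig_of_mem_maxGen (g : G) {c : ℂ} {v : V}
    (hv : v ∈ Module.End.maxGenEigenspace (V.ρ g) c) : V.ρ g v = c • v := by
  rw [Module.End.IsFinitelySemisimple.maxGenEigenspace_eq_eigenspace (rho_isFinitelySemisimple V g)] at hv
  exact Module.End.mem_eigenspace_iff.mp hv

variable (N : Subgroup G) [N.Normal]

noncomputable def Vchi (χf : ↥N → ℂ) : Submodule ℂ V :=
  ⨅ m : ↥N, Module.End.maxGenEigenspace (V.ρ (m : G)) (χf m)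

def conjN (g : G) (m : ↥N) : ↥N :=
  ⟨g⁻¹ * ↑m * g, by simpa using Subgroup.Normal.conj_mem ‹N.Normal› (↑m) m.2 g⁻¹⟩

def sigma (g : G) (χf : ↥N → ℂ) : ↥N → ℂ := fun m => χf (conjN N g m)

lemma sigma_one (χf : ↥N → ℂ) : sigma N 1 χf = χf := by
  funext m
  simp only [sigma, conjN]
  congr 1
  ext
  simp

lemma sigma_mul (g h : G) (χf : ↥N → ℂ) : sigma N g (sigma N h χf) = sigma N (g * h) χf := by
  funext m
  simp only [sigma, conjN]
  congr 1
  ext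
  simp [mul_assoc]

lemma mem_Vchi_iff (χf : ↥N → ℂ) (v : V) :
    v ∈ Vchi V N χf ↔ ∀ m : ↥N, v ∈ Module.End.maxGenEigenspace (V.ρ (m : G)) (χf m) :=
  Submodule.mem_iInf _

lemma apply_of_mem_Vchi {χf : ↥N → ℂ} {v : V} (hv : v ∈ Vchi V N χf) (m : ↥N) :
    V.ρ (m : G) v = χf m • v :=
  eig_of_mem_maxGen V _ ((mem_Vchi_iff V N χf v).mp hv m)

lemma rho_mapsTo_Vchi (g : G) (χf : ↥N → ℂ) :
    ∀ v ∈ Vchi V N χf, V.ρ g v ∈ Vchi V N (sigma N g χf) := by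
  intro v hv
  rw [mem_Vchi_iff] at hv ⊢
  intro m
  obtain ⟨k, hk⟩ := (Module.End.mem_maxGenEigenspace _ _ _).mp (hv (conjN N g m))
  rw [Module.End.mem_maxGenEigenspace]
  refine ⟨k, ?_⟩
  have hsemi : SemiconjBy (V.ρ g)
      (V.ρ (↑(conjN N g m) : G) - sigma N g χf m • (1 : Module.End ℂ V))
      (V.ρ (↑m : G) - sigma N g χf m • (1 : Module.End ℂ V)) := by
    have hmg : (↑m : G) * g = g * ↑(conjN N g m) := by
      simp only [conjN]
      group
    unfold SemiconjBy
    rw [mul_sub, sub_mul, ← map_mul, ← map_mul, ← hmg]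
    congr 1
    ext w
    simp
  have := (hsemi.pow_right k).eq
  calc ((V.ρ (↑m : G) - sigma N g χf m • 1) ^ k) (V.ρ g v)
      = (((V.ρ (↑m : G) - sigma N g χf m • 1) ^ k) * V.ρ g) v := rfl
    _ = (V.ρ g * ((V.ρ (↑(conjN N g m) : G) - sigma N g χf m • 1) ^ k)) v := by rw [← this]
    _ = V.ρ g (((V.ρ (↑(conjN N g m) : G) - sigma N g χf m • 1) ^ k) v) := rfl
    _ = 0 := by
        have hc : sigma N g χf m = χf (conjN N g m) := rfl
        rw [hc, hk, map_zero]


end AbNormAux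

open scoped DirectSum in
open AbNormAux in
/-- If `G` has a faithful primitive irreducible character, then every abelian normal
subgroup of `G` is central. -/
theorem abelian_normal_le_center (G : Type) [Group G] [Fintype G]
    (V : FDRep ℂ G) [Simple V]
    (hfaith : ∀ g : G, V.character g = V.character 1 → g = 1)
    (hprim : IsPrimitiveChar V.character)
    (N : Subgroup G) [N.Normal]
    (hab : ∀ a ∈ N, ∀ b ∈ N, a * b = b * a) :
    N ≤ Subgroup.center G := by
  classical
  haveI : Nontrivial V := nontrivial_of_simple V
  -- the commuting family of endomorphisms coming from N
  have hcomm : ∀ m₁ m₂ : ↥N, Commute (V.ρ (↑m₁ : G)) (V.ρ (↑m₂ : G)) := by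
    intro m₁ m₂
    unfold Commute SemiconjBy
    rw [← map_mul, ← map_mul, hab _ m₁.2 _ m₂.2]
  have hspan : ⨆ χf : ↥N → ℂ, Vchi V N χf = ⊤ := by
    apply Module.End.iSup_iInf_maxGenEigenspace_eq_top_of_iSup_maxGenEigenspace_eq_top_of_commute
    · exact fun i j _ => hcomm i j
    · exact fun m => Module.End.iSup_maxGenEigenspace_eq_top _
  have hex : ∃ χf : ↥N → ℂ, Vchi V N χf ≠ ⊥ := by
    by_contra h
    push_neg at h
    rw [iSup_congr h] at hspan
    simp only [iSup_bot] at hspan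
    obtain ⟨a, b, hab'⟩ := exists_pair_ne V
    apply hab'
    have ha : a ∈ (⊥ : Submodule ℂ V) := hspan ▸ Submodule.mem_top
    have hb : b ∈ (⊥ : Submodule ℂ V) := hspan ▸ Submodule.mem_top
    rw [Submodule.mem_bot] at ha hb
    rw [ha, hb]
  obtain ⟨lam0, hlam0⟩ := hex
  let H : Subgroup G :=
    { carrier := {x : G | sigma N x lam0 = lam0}
      one_mem' := sigma_one N lam0
      mul_mem' := by
        intro a b ha hb
        show sigma N (a * b) lam0 = lam0
        rw [← sigma_mul]
        rw [show sigma N b lam0 = lam0 from hb]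
        exact ha
      inv_mem' := by
        intro a ha
        show sigma N a⁻¹ lam0 = lam0
        calc sigma N a⁻¹ lam0 = sigma N a⁻¹ (sigma N a lam0) := by
              rw [show sigma N a lam0 = lam0 from ha]
          _ = sigma N (a⁻¹ * a) lam0 := sigma_mul N _ _ _
          _ = lam0 := by rw [inv_mul_cancel]; exact sigma_one N lam0 }
  have hVtop : Vchi V N lam0 = ⊤ := by
    rcases eq_or_ne H ⊤ with hH | hH
    · have hinv : ∀ x : G, ∀ v ∈ Vchi V N lam0, V.ρ x v ∈ Vchi V N lam0 := by
        intro x v hv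
        have hx : sigma N x lam0 = lam0 := by
          have hxH : x ∈ H := hH ▸ Subgroup.mem_top x
          exact hxH
        have hmt := rho_mapsTo_Vchi V N x lam0 v hv
        rwa [hx] at hmt
      rcases invariant_eq_bot_or_top V (Vchi V N lam0) hinv with h | h
      · exact absurd h hlam0
      · exact h
    · exfalso
      -- the orbit of lam0 under G
      let Lam : Finset (↥N → ℂ) := Finset.univ.image (fun x : G => sigma N x lam0)
      have hmemL : ∀ x : G, sigma N x lam0 ∈ Lam := fun x =>
        Finset.mem_image_of_mem _ (Finset.mem_univ x)
      have hlam0L : lam0 ∈ Lam := by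
        have h1 := hmemL 1
        rwa [sigma_one] at h1
      have hLclosed : ∀ (x : G) (lam : ↥N → ℂ), lam ∈ Lam → sigma N x lam ∈ Lam := by
        intro x lam hlam
        obtain ⟨y, -, hy⟩ := Finset.mem_image.mp hlam
        rw [← hy, sigma_mul]
        exact hmemL _
      -- independence of the simultaneous eigenspaces
      have hind : iSupIndep (fun χf : ↥N → ℂ => Vchi V N χf) :=
        Module.End.independent_iInf_maxGenEigenspace_of_forall_mapsTo _
          (fun i j φ => Module.End.mapsTo_maxGenEigenspace_of_comm (hcomm j i) φ)
      -- the orbit spans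
      have horb : (⨆ lam : ↥Lam, Vchi V N (lam : ↥N → ℂ)) = ⊤ := by
        have hSinv : ∀ x : G, ∀ v ∈ (⨆ lam : ↥Lam, Vchi V N (lam : ↥N → ℂ)),
            V.ρ x v ∈ (⨆ lam : ↥Lam, Vchi V N (lam : ↥N → ℂ)) := by
          intro x v hv
          have hmap : Submodule.map (V.ρ x) (⨆ lam : ↥Lam, Vchi V N (lam : ↥N → ℂ))
              ≤ ⨆ lam : ↥Lam, Vchi V N (lam : ↥N → ℂ) := by
            rw [Submodule.map_iSup]
            apply iSup_le
            intro lam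
            have h1 : Submodule.map (V.ρ x) (Vchi V N (lam : ↥N → ℂ))
                ≤ Vchi V N (sigma N x (lam : ↥N → ℂ)) := by
              rintro _ ⟨v, hv, rfl⟩
              exact rho_mapsTo_Vchi V N x _ v hv
            exact h1.trans (le_iSup_of_le ⟨sigma N x (lam : ↥N → ℂ),
              hLclosed x _ lam.2⟩ le_rfl)
          exact hmap ⟨v, hv, rfl⟩
        rcases invariant_eq_bot_or_top V _ hSinv with h | h
        · exfalso
          apply hlam0
          have hle : Vchi V N lam0 ≤ ⨆ lam : ↥Lam, Vchi V N (lam : ↥N → ℂ) :=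
            le_iSup_of_le ⟨lam0, hlam0L⟩ le_rfl
          rw [h] at hle
          exact le_bot_iff.mp hle
        · exact h
      have hInt : DirectSum.IsInternal (fun lam : ↥Lam => Vchi V N (lam : ↥N → ℂ)) :=
        (DirectSum.isInternal_submodule_iff_iSupIndep_and_iSup_eq_top _).mpr
          ⟨hind.comp Subtype.val_injective, horb⟩
      let e : (⨁ lam : ↥Lam, ↥(Vchi V N (lam : ↥N → ℂ))) ≃ₗ[ℂ] V :=
        LinearEquiv.ofBijective (DirectSum.coeLinearMap _) hInt
      let proj : ↥Lam → (V →ₗ[ℂ] V) := fun lam =>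
        (Vchi V N (lam : ↥N → ℂ)).subtype ∘ₗ
          (DirectSum.component ℂ ↥Lam _ lam) ∘ₗ
          (e.symm : V →ₗ[ℂ] ⨁ lam : ↥Lam, ↥(Vchi V N (lam : ↥N → ℂ)))
      have hproj_mem : ∀ (lam : ↥Lam) (v : V), proj lam v ∈ Vchi V N (lam : ↥N → ℂ) :=
        fun lam v => ((DirectSum.component ℂ ↥Lam _ lam) (e.symm v)).2
      have hproj_same : ∀ (mu : ↥Lam) (v : V) (hv : v ∈ Vchi V N (mu : ↥N → ℂ)),
          proj mu v = v := by
        intro mu v hv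
        show ((e.symm v) mu : V) = v
        rw [hInt.ofBijective_coeLinearMap_of_mem hv]
      have hproj_ne : ∀ (mu lam : ↥Lam) (v : V), mu ≠ lam →
          v ∈ Vchi V N (mu : ↥N → ℂ) → proj lam v = 0 := by
        intro mu lam v hne hv
        show ((e.symm v) lam : V) = 0
        rw [hInt.ofBijective_coeLinearMap_of_mem_ne hne hv]
        rfl
      have hsum : ∀ v : V, (∑ lam : ↥Lam, proj lam v) = v := by
        intro v
        have hy : DirectSum.coeLinearMap (fun lam : ↥Lam => Vchi V N (lam : ↥N → ℂ))
            (e.symm v) = v := e.apply_symm_apply v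
        conv_rhs => rw [← hy, ← DirectSum.sum_univ_of (e.symm v), map_sum]
        refine Finset.sum_congr rfl fun lam _ => ?_
        rw [DirectSum.coeLinearMap_of]
        rfl
      let B : G → ↥Lam → ℂ := fun x lam => LinearMap.trace ℂ V (proj lam ∘ₗ (V.ρ x))
      have hchi : ∀ x : G, V.character x = ∑ lam : ↥Lam, B x lam := by
        intro x
        unfold FDRep.character
        rw [← map_sum]
        congr 1
        ext v
        rw [LinearMap.sum_apply]
        simp only [LinearMap.comp_apply]
        exact (hsum (V.ρ x v)).symm
      have hBmem : ∀ (x : G) (lam : ↥Lam) (v : V),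
          (proj lam ∘ₗ V.ρ x) v ∈ Vchi V N (lam : ↥N → ℂ) :=
        fun x lam v => hproj_mem lam (V.ρ x v)
      have hBtr : ∀ (x : G) (lam : ↥Lam),
          B x lam = LinearMap.trace ℂ ↥(Vchi V N (lam : ↥N → ℂ))
            ((proj lam ∘ₗ V.ρ x).restrict (p := Vchi V N (lam : ↥N → ℂ)) (q := Vchi V N (lam : ↥N → ℂ)) (fun v _ => hBmem x lam v)) :=
        fun x lam =>
          (LinearMap.trace_restrict_eq_of_forall_mem _ _ (hBmem x lam) _).symm
      have hB0 : ∀ (x : G) (lam : ↥Lam), sigma N x (lam : ↥N → ℂ) ≠ (lam : ↥N → ℂ) →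
          B x lam = 0 := by
        intro x lam hne
        rw [hBtr]
        have hzero : (proj lam ∘ₗ V.ρ x).restrict (p := Vchi V N (lam : ↥N → ℂ)) (q := Vchi V N (lam : ↥N → ℂ)) (fun v _ => hBmem x lam v) = 0 := by
          ext ⟨v, hv⟩
          have h1 : V.ρ x v ∈ Vchi V N (sigma N x (lam : ↥N → ℂ)) :=
            rho_mapsTo_Vchi V N x _ v hv
          have hmu : sigma N x (lam : ↥N → ℂ) ∈ Lam := hLclosed x _ lam.2
          have h2 := hproj_ne ⟨_, hmu⟩ lam (V.ρ x v)
            (fun hEq => hne (congrArg Subtype.val hEq)) h1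
          simpa [LinearMap.restrict_apply] using h2
        rw [hzero, map_zero]
      have hBfix : ∀ (x : G) (lam : ↥Lam)
          (hfix : ∀ v ∈ Vchi V N (lam : ↥N → ℂ), V.ρ x v ∈ Vchi V N (lam : ↥N → ℂ)),
          B x lam = LinearMap.trace ℂ ↥(Vchi V N (lam : ↥N → ℂ)) ((V.ρ x).restrict hfix) := by
        intro x lam hfix
        rw [hBtr]
        congr 1
        ext ⟨v, hv⟩
        have h2 := hproj_same lam (V.ρ x v) (hfix v hv)
        simpa [LinearMap.restrict_apply] using h2
      -- the representation of H on Vchi lam0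
      have hmapsH : ∀ h : ↥H, ∀ v ∈ Vchi V N lam0, V.ρ (h : G) v ∈ Vchi V N lam0 := by
        intro h v hv
        have h1 := rho_mapsTo_Vchi V N (h : G) lam0 v hv
        rwa [show sigma N (h : G) lam0 = lam0 from h.2] at h1
      let ρW : Representation ℂ ↥H ↥(Vchi V N lam0) :=
        { toFun := fun h => (V.ρ (h : G)).restrict (hmapsH h)
          map_one' := by
            ext v
            simp [LinearMap.restrict_apply]
          map_mul' := by
            intro a b
            ext v
            simp [LinearMap.restrict_apply] }
      let W : FDRep ℂ ↥H := FDRep.of ρW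
      refine hprim H hH W ?_
      funext x
      -- condition for the dite in indChar
      have hcond : ∀ y : G, (y * x * y⁻¹ ∈ H) ↔
          sigma N x (sigma N y⁻¹ lam0) = sigma N y⁻¹ lam0 := by
        intro y
        constructor
        · intro hy
          have h1 : sigma N (y * x * y⁻¹) lam0 = lam0 := hy
          calc sigma N x (sigma N y⁻¹ lam0) = sigma N (x * y⁻¹) lam0 := sigma_mul N _ _ _
            _ = sigma N (y⁻¹ * (y * x * y⁻¹)) lam0 := by congr 1; group
            _ = sigma N y⁻¹ (sigma N (y * x * y⁻¹) lam0) := (sigma_mul N _ _ _).symm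
            _ = sigma N y⁻¹ lam0 := by rw [h1]
        · intro h1
          show sigma N (y * x * y⁻¹) lam0 = lam0
          have e1 : sigma N (y * x * y⁻¹) lam0
              = sigma N y (sigma N x (sigma N y⁻¹ lam0)) := by
            rw [sigma_mul, sigma_mul]
          rw [e1, h1, sigma_mul, mul_inv_cancel]
          exact sigma_one N lam0
      have hterm : ∀ y : G,
          (if h : y * x * y⁻¹ ∈ H then W.character ⟨y * x * y⁻¹, h⟩ else 0)
            = B x ⟨sigma N y⁻¹ lam0, hmemL y⁻¹⟩ := by
        intro y
        rcases Classical.em (y * x * y⁻¹ ∈ H) with hy | hy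
        · rw [dif_pos hy]
          have hfixfun : sigma N x (sigma N y⁻¹ lam0) = sigma N y⁻¹ lam0 := (hcond y).mp hy
          have hfix : ∀ v ∈ Vchi V N (sigma N y⁻¹ lam0), V.ρ x v ∈ Vchi V N (sigma N y⁻¹ lam0) := by
            intro v hv
            have h1 := rho_mapsTo_Vchi V N x _ v hv
            rwa [hfixfun] at h1
          rw [hBfix x ⟨sigma N y⁻¹ lam0, hmemL y⁻¹⟩ hfix]
          have hmy : ∀ v ∈ Vchi V N (sigma N y⁻¹ lam0), V.ρ y v ∈ Vchi V N lam0 := by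
            intro v hv
            have h1 := rho_mapsTo_Vchi V N y _ v hv
            rwa [sigma_mul, mul_inv_cancel, sigma_one] at h1
          have hmy' : ∀ v ∈ Vchi V N lam0, V.ρ y⁻¹ v ∈ Vchi V N (sigma N y⁻¹ lam0) :=
            fun v hv => rho_mapsTo_Vchi V N y⁻¹ lam0 v hv
          let Phi : ↥(Vchi V N (sigma N y⁻¹ lam0)) ≃ₗ[ℂ] ↥(Vchi V N lam0) :=
            LinearEquiv.ofLinear ((V.ρ y).restrict hmy) ((V.ρ y⁻¹).restrict hmy')
              (by
                ext v
                show V.ρ y (V.ρ y⁻¹ (v : CoeSort.coe V)) = (v : CoeSort.coe V)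
                rw [← Module.End.mul_apply, ← map_mul, mul_inv_cancel, map_one]
                rfl)
              (by
                ext v
                show V.ρ y⁻¹ (V.ρ y (v : CoeSort.coe V)) = (v : CoeSort.coe V)
                rw [← Module.End.mul_apply, ← map_mul, inv_mul_cancel, map_one]
                rfl)
          have hconj : (W.ρ ⟨y * x * y⁻¹, hy⟩)
              = Phi.conj ((V.ρ x).restrict hfix) := by
            ext ⟨v, hv⟩
            rw [LinearEquiv.conj_apply]
            show V.ρ (y * x * y⁻¹) v = V.ρ y (V.ρ x (V.ρ y⁻¹ v))
            rw [← Module.End.mul_apply, ← Module.End.mul_apply, ← map_mul, ← map_mul,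
              mul_assoc]
          show LinearMap.trace ℂ ↥(Vchi V N lam0) (W.ρ ⟨y * x * y⁻¹, hy⟩) = _
          rw [hconj]
          exact LinearMap.trace_conj' _ _
        · rw [dif_neg hy]
          exact (hB0 x _ (fun hEq => hy ((hcond y).mpr hEq))).symm
      -- summing over G
      have hκsum : (∑ y : G, B x ⟨sigma N y⁻¹ lam0, hmemL y⁻¹⟩)
          = (Fintype.card ↥H : ℂ) * ∑ lam : ↥Lam, B x lam := by
        let κ : G → ↥Lam := fun y => ⟨sigma N y⁻¹ lam0, hmemL y⁻¹⟩
        have himg : Finset.univ.image κ = Finset.univ := by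
          apply Finset.eq_univ_iff_forall.mpr
          rintro ⟨lam, hlam⟩
          obtain ⟨z, -, hz⟩ := Finset.mem_image.mp hlam
          refine Finset.mem_image.mpr ⟨z⁻¹, Finset.mem_univ _, ?_⟩
          apply Subtype.ext
          simpa [κ] using hz
        have hfib : ∀ lam : ↥Lam, (Finset.univ.filter (fun y => κ y = lam)).card
            = Fintype.card ↥H := by
          rintro ⟨lam, hlam⟩
          obtain ⟨z, -, hz⟩ := Finset.mem_image.mp hlam
          have hcondf : ∀ y : G, (κ y = (⟨lam, hlam⟩ : ↥Lam)) ↔ y * z ∈ H := by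
            intro y
            rw [Subtype.ext_iff]
            show sigma N y⁻¹ lam0 = lam ↔ y * z ∈ H
            rw [← hz]
            constructor
            · intro h1
              show sigma N (y * z) lam0 = lam0
              calc sigma N (y * z) lam0 = sigma N y (sigma N z lam0) := (sigma_mul N _ _ _).symm
                _ = sigma N y (sigma N y⁻¹ lam0) := by rw [h1]
                _ = sigma N (y * y⁻¹) lam0 := sigma_mul N _ _ _
                _ = lam0 := by rw [mul_inv_cancel]; exact sigma_one N lam0
            · intro h1
              have h2 : sigma N (y * z) lam0 = lam0 := h1
              calc sigma N y⁻¹ lam0 = sigma N y⁻¹ (sigma N (y * z) lam0) := by rw [h2]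
                _ = sigma N (y⁻¹ * (y * z)) lam0 := sigma_mul N _ _ _
                _ = sigma N z lam0 := by congr 1; group
          have hfilter : (Finset.univ.filter (fun y => κ y = (⟨lam, hlam⟩ : ↥Lam)))
              = Finset.univ.filter (fun y : G => y * z ∈ H) := by
            ext y
            simp only [Finset.mem_filter, Finset.mem_univ, true_and]
            exact hcondf y
          rw [hfilter, ← Fintype.card_subtype]
          exact Fintype.card_congr
            ⟨fun p => ⟨p.1 * z, p.2⟩, fun h => ⟨h.1 * z⁻¹, by simpa using h.2⟩,
              fun p => by apply Subtype.ext; simp, fun h => by apply Subtype.ext; simp⟩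
        calc (∑ y : G, B x (κ y))
            = ∑ lam ∈ Finset.univ.image κ,
                (Finset.univ.filter (fun y => κ y = lam)).card • B x lam :=
              Finset.sum_comp (B x) κ
          _ = ∑ lam : ↥Lam, (Fintype.card ↥H) • B x lam := by
              rw [himg]
              exact Finset.sum_congr rfl fun lam _ => by rw [hfib lam]
          _ = (Fintype.card ↥H : ℂ) * ∑ lam : ↥Lam, B x lam := by
              rw [Finset.mul_sum]
              exact Finset.sum_congr rfl fun lam _ => nsmul_eq_mul _ _
      have hcardH : ((Fintype.card ↥H : ℂ)) ≠ 0 := by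
        exact_mod_cast Nat.cast_ne_zero.mpr Fintype.card_ne_zero
      show V.character x = indChar H W.character x
      unfold indChar
      rw [Finset.sum_congr rfl (fun y _ => hterm y), hκsum, hchi x, ← mul_assoc,
        inv_mul_cancel₀ hcardH, one_mul]
  -- Step B: scalar action implies centrality
  intro n hn
  rw [Subgroup.mem_center_iff]
  intro g
  have hscal : ∀ (m : G) (hm : m ∈ N) (v : V), V.ρ m v = lam0 ⟨m, hm⟩ • v := by
    intro m hm v
    exact apply_of_mem_Vchi V N (hVtop ▸ Submodule.mem_top) ⟨m, hm⟩
  have hgng : g * n * g⁻¹ ∈ N := Subgroup.Normal.conj_mem ‹N.Normal› n hn g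
  have hc : lam0 ⟨g * n * g⁻¹, hgng⟩ = lam0 ⟨n, hn⟩ := by
    obtain ⟨u, hu⟩ := exists_ne (0 : V)
    have h1 : V.ρ (g * n * g⁻¹) (V.ρ g u) = lam0 ⟨g * n * g⁻¹, hgng⟩ • V.ρ g u :=
      hscal _ hgng _
    have h2 : V.ρ (g * n * g⁻¹) (V.ρ g u) = lam0 ⟨n, hn⟩ • V.ρ g u := by
      have e1 : V.ρ (g * n * g⁻¹) (V.ρ g u) = V.ρ (g * n) u := by
        rw [← Module.End.mul_apply, ← map_mul]
        congr 1
        group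
      have e2 : V.ρ (g * n) u = V.ρ g (V.ρ n u) := by
        rw [map_mul]; rfl
      rw [e1, e2, hscal n hn u, map_smul]
    have hgu : V.ρ g u ≠ 0 := by
      intro h0
      apply hu
      have h0' := congrArg (V.ρ g⁻¹) h0
      rw [← Module.End.mul_apply, ← map_mul, inv_mul_cancel, map_one, map_zero] at h0'
      exact h0'
    have h3 : lam0 ⟨g * n * g⁻¹, hgng⟩ • V.ρ g u = lam0 ⟨n, hn⟩ • V.ρ g u := h1.symm.trans h2
    have h4 : (lam0 ⟨g * n * g⁻¹, hgng⟩ - lam0 ⟨n, hn⟩) • V.ρ g u = 0 := by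
      rw [sub_smul, h3, sub_self]
    rcases smul_eq_zero.mp h4 with h5 | h5
    · exact sub_eq_zero.mp h5
    · exact absurd h5 hgu
  have hw : V.ρ (g * n * g⁻¹ * n⁻¹) = 1 := by
    ext v
    have e0 : V.ρ (g * n * g⁻¹ * n⁻¹) v = V.ρ (g * n * g⁻¹) (V.ρ n⁻¹ v) := by
      rw [map_mul]; rfl
    rw [e0, hscal _ hgng _, hc, ← hscal n hn (V.ρ n⁻¹ v), ← Module.End.mul_apply, ← map_mul]
    simp
  have hchar : V.character (g * n * g⁻¹ * n⁻¹) = V.character 1 := by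
    unfold FDRep.character
    rw [hw, show V.ρ (1 : G) = 1 from map_one V.ρ]
  have h1 := hfaith _ hchar
  have h2 : g * n * g⁻¹ = n := by rwa [mul_inv_eq_one] at h1
  rw [mul_inv_eq_iff_eq_mul] at h2
  exact h2
end

section
/- Let T be a finite group with a central subgroup Z such that T/Z is a non-abelian simple group. If the solvable residual T^∞ of T is simple, then T = T^∞ × Z. -/
open scoped Pointwise
open scoped commutatorElement


/-- The solvable residual of a group: the intersection of the derived series, i.e. for a
finite group the last term of the derived series. -/
def solvableResidual (T : Type) [Group T] : Subgroup T :=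
  ⨅ n : ℕ, derivedSeries T n

section Aux

variable {T : Type} [Group T]

lemma commutatorElement_mul_central (a z h : T) (hz : z ∈ Subgroup.center T) :
    ⁅a * z, h⁆ = ⁅a, h⁆ := by
  have hz' := Subgroup.mem_center_iff.mp hz
  simp only [commutatorElement_def, mul_inv_rev, mul_assoc]
  congr 1
  rw [← mul_assoc z h, ← hz' h, mul_assoc h z, mul_inv_cancel_left]

lemma commutatorElement_mul_central' (a b w : T) (hw : w ∈ Subgroup.center T) :
    ⁅a, b * w⁆ = ⁅a, b⁆ := by
  calc ⁅a, b * w⁆ = ⁅b * w, a⁆⁻¹ := (commutatorElement_inv (b * w) a).symm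
    _ = ⁅b, a⁆⁻¹ := by rw [commutatorElement_mul_central b w a hw]
    _ = ⁅a, b⁆ := commutatorElement_inv b a

/-- If `commutator T ⊔ Z = ⊤` with `Z` central, then `T' = T''`. -/
lemma commutator_perfect (Z : Subgroup T) [Z.Normal] (hZ : Z ≤ Subgroup.center T)
    (hsup : commutator T ⊔ Z = ⊤) :
    ⁅commutator T, commutator T⁆ = commutator T := by
  refine le_antisymm ?_ ?_
  · rw [commutator_def]
    exact Subgroup.commutator_mono le_top le_top
  · rw [commutator_def, Subgroup.commutator_le]
    intro g _ h _
    have hg : g ∈ ((commutator T : Set T) * (Z : Set T)) := by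
      rw [← Subgroup.mul_normal]; rw [hsup]; trivial
    have hh : h ∈ ((commutator T : Set T) * (Z : Set T)) := by
      rw [← Subgroup.mul_normal]; rw [hsup]; trivial
    obtain ⟨a, ha, z, hz, rfl⟩ := hg
    obtain ⟨b, hb, w, hw, rfl⟩ := hh
    rw [commutatorElement_mul_central a z _ (hZ hz),
      commutatorElement_mul_central' a b w (hZ hw)]
    exact Subgroup.commutator_mem_commutator ha hb

lemma solvableResidual_eq_commutator (Z : Subgroup T) [Z.Normal] (hZ : Z ≤ Subgroup.center T)
    (hsup : commutator T ⊔ Z = ⊤) :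
    solvableResidual T = commutator T := by
  have hds : ∀ n : ℕ, derivedSeries T (n + 1) = commutator T := by
    intro n
    induction n with
    | zero => simp [derivedSeries_succ, derivedSeries_zero, commutator_def]
    | succ n ih =>
        rw [derivedSeries_succ, ih, commutator_perfect Z hZ hsup]
  refine le_antisymm ?_ ?_
  · exact le_trans (iInf_le _ 1) (le_of_eq (hds 0))
  · refine le_iInf fun n => ?_
    cases n with
    | zero => exact le_top
    | succ n => exact le_of_eq (hds n).symm

end Aux

/-- If `Z ≤ Z(T)`, `T/Z` is non-abelian simple and the solvable residual `T^∞` is simple,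
then `T = T^∞ × Z`. -/
theorem eq_residual_times_center (T : Type) [Group T] [Fintype T]
    (Z : Subgroup T) [Z.Normal] (hZ : Z ≤ Subgroup.center T)
    (hsimple : IsSimpleGroup (T ⧸ Z))
    (hnonab : ∃ a b : T ⧸ Z, a * b ≠ b * a)
    (hres : IsSimpleGroup ↥(solvableResidual T)) :
    Nonempty (T ≃* (↥(solvableResidual T) × ↥Z)) ∧
      solvableResidual T ⊔ Z = ⊤ ∧ solvableResidual T ⊓ Z = ⊥ := by
  -- Step 1: the image of the commutator subgroup in `T ⧸ Z` is everything.
  have hmap : Subgroup.map (QuotientGroup.mk' Z) (commutator T) = ⊤ := by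
    have h1 : Subgroup.map (QuotientGroup.mk' Z) (commutator T) = commutator (T ⧸ Z) := by
      rw [commutator_def, Subgroup.map_commutator, commutator_def,
        Subgroup.map_top_of_surjective _ (QuotientGroup.mk'_surjective Z)]
    rw [h1]
    rcases hsimple.eq_bot_or_eq_top_of_normal (commutator (T ⧸ Z)) inferInstance with h | h
    · exfalso
      obtain ⟨a, b, hab⟩ := hnonab
      have : ⁅a, b⁆ ∈ commutator (T ⧸ Z) :=
        Subgroup.commutator_mem_commutator (Subgroup.mem_top a) (Subgroup.mem_top b)
      rw [h, Subgroup.mem_bot] at this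
      exact hab (commutatorElement_eq_one_iff_mul_comm.mp this)
    · exact h
  have hsup : commutator T ⊔ Z = ⊤ := by
    have := congrArg (Subgroup.comap (QuotientGroup.mk' Z)) hmap
    rwa [Subgroup.comap_map_eq, QuotientGroup.ker_mk', Subgroup.comap_top] at this
  have hResEq : solvableResidual T = commutator T :=
    solvableResidual_eq_commutator Z hZ hsup
  rw [hResEq] at hres ⊢
  set R := commutator T with hR
  have hRZsup : R ⊔ Z = ⊤ := hsup
  -- Step 2: `R ⊓ Z = ⊥`.
  have hN : (Z.subgroupOf R).Normal := by
    constructor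
    intro n hn g
    rw [Subgroup.mem_subgroupOf] at hn ⊢
    have hc := Subgroup.mem_center_iff.mp (hZ hn)
    have : ((g * n * g⁻¹ : R) : T) = (n : T) := by
      push_cast
      rw [hc (g : T), mul_inv_cancel_right]
    rw [this]; exact hn
  have hinf : R ⊓ Z = ⊥ := by
    rcases hres.eq_bot_or_eq_top_of_normal (Z.subgroupOf R) hN with h | h
    · rw [Subgroup.subgroupOf_eq_bot] at h
      rw [inf_comm]
      exact h.eq_bot
    · exfalso
      rw [Subgroup.subgroupOf_eq_top] at h
      -- then `R ≤ Z`, so `T ⧸ Z` is abelian, contradiction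
      obtain ⟨a, b, hab⟩ := hnonab
      obtain ⟨x, rfl⟩ := QuotientGroup.mk'_surjective Z a
      obtain ⟨y, rfl⟩ := QuotientGroup.mk'_surjective Z b
      apply hab
      have : ⁅x, y⁆ ∈ Z := h (Subgroup.commutator_mem_commutator
        (Subgroup.mem_top x) (Subgroup.mem_top y))
      have h2 : (QuotientGroup.mk' Z) ⁅x, y⁆ = 1 := by
        rwa [← QuotientGroup.ker_mk' Z, MonoidHom.mem_ker] at this
      rw [map_commutatorElement] at h2
      have := commutatorElement_eq_one_iff_mul_comm.mp h2
      exact this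
  -- Step 3: build the isomorphism.
  have hcomm : ∀ (r : R) (z : Z), Commute ((r : T)) ((z : T)) := fun r z =>
    Subgroup.mem_center_iff.mp (hZ z.2) r
  let φ : ↥R × ↥Z →* T := (R.subtype).noncommCoprod (Z.subtype) (fun r z => hcomm r z)
  have hφ : ∀ p : ↥R × ↥Z, φ p = (p.1 : T) * (p.2 : T) := fun p => rfl
  have hinj : Function.Injective φ := by
    rw [← MonoidHom.ker_eq_bot_iff]
    rw [eq_bot_iff]
    rintro ⟨r, z⟩ hp
    rw [MonoidHom.mem_ker, hφ] at hp
    have hr : (r : T) ∈ R ⊓ Z := by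
      constructor
      · exact r.2
      · have : (r : T) = (z : T)⁻¹ := by
          rw [eq_inv_iff_mul_eq_one]; exact hp
        rw [this]; exact Z.inv_mem z.2
    rw [hinf, Subgroup.mem_bot] at hr
    have hz : (z : T) = 1 := by
      rw [hr, one_mul] at hp; exact hp
    simp only [Subgroup.mem_bot, Prod.mk_eq_one]
    exact ⟨Subtype.ext hr, Subtype.ext hz⟩
  have hsurj : Function.Surjective φ := by
    intro g
    have hg : g ∈ ((R : Set T) * (Z : Set T)) := by
      rw [← Subgroup.mul_normal, hRZsup]; trivial
    obtain ⟨a, ha, z, hz, rfl⟩ := hg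
    exact ⟨(⟨a, ha⟩, ⟨z, hz⟩), rfl⟩
  exact ⟨⟨(MulEquiv.ofBijective φ ⟨hinj, hsurj⟩).symm⟩, hRZsup, hinf⟩
end
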